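/- Let x = [[n,α],[β,n]] be an involution and z = [[t,ε],[φ,1+t]] an element of order 3 in the Paige loop over F₂. Then zx has order 2 if and only if α·φ + β·ε = n in F₂. -/
import Mathlib


/-- Zorn vector matrices over the field with two elements. -/
structure Zorn2 where
  a : ZMod 2
  alpha : Fin 3 → ZMod 2
  beta : Fin 3 → ZMod 2
  b : ZMod 2

namespace Zorn2

/-- Standard dot product on `F₂³`. -/
def zdot (u v : Fin 3 → ZMod 2) : ZMod 2 := u 0 * v 0 + u 1 * v 1 + u 2 * v 2

/-- Standard cross product on `F₂³`. -/
def zcross (u v : Fin 3 → ZMod 2) : Fin 3 → ZMod 2 :=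
  ![u 1 * v 2 - u 2 * v 1, u 2 * v 0 - u 0 * v 2, u 0 * v 1 - u 1 * v 0]

/-- Zorn's vector matrix multiplication. -/
instance : Mul Zorn2 :=
  ⟨fun x y =>
    { a := x.a * y.a + zdot x.alpha y.beta
      alpha := fun i => x.a * y.alpha i + x.alpha i * y.b - zcross x.beta y.beta i
      beta := fun i => x.beta i * y.a + x.b * y.beta i + zcross x.alpha y.alpha i
      b := zdot x.beta y.alpha + x.b * y.b }⟩

instance : One Zorn2 := ⟨{ a := 1, alpha := fun _ => 0, beta := fun _ => 0, b := 1 }⟩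

instance : Add Zorn2 :=
  ⟨fun x y => { a := x.a + y.a, alpha := x.alpha + y.alpha,
                beta := x.beta + y.beta, b := x.b + y.b }⟩

/-- Determinant (norm) of a Zorn vector matrix. -/
def det (x : Zorn2) : ZMod 2 := x.a * x.b - zdot x.alpha x.beta

/-- `x` has multiplicative order 2. -/
def ord2 (x : Zorn2) : Prop := x * x = 1 ∧ x ≠ 1

/-- `x` has multiplicative order 3. -/
def ord3 (x : Zorn2) : Prop := x * (x * x) = 1 ∧ x * x ≠ 1 ∧ x ≠ 1

end Zorn2
namespace Zorn2

@[ext] lemma ext' {x y : Zorn2} (h1 : x.a = y.a) (h2 : x.alpha = y.alpha)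
    (h3 : x.beta = y.beta) (h4 : x.b = y.b) : x = y := by
  cases x; cases y; simp_all

lemma mul_def (x y : Zorn2) : x * y =
    { a := x.a * y.a + zdot x.alpha y.beta
      alpha := fun i => x.a * y.alpha i + x.alpha i * y.b - zcross x.beta y.beta i
      beta := fun i => x.beta i * y.a + x.b * y.beta i + zcross x.alpha y.alpha i
      b := zdot x.beta y.alpha + x.b * y.b } := rfl

lemma one_def : (1 : Zorn2) = ⟨1, fun _ => 0, fun _ => 0, 1⟩ := rfl

lemma zsq : ∀ a : ZMod 2, a * a = a := by decide
lemma zadd : ∀ a : ZMod 2, a + a = 0 := by decide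

lemma det_mul (x y : Zorn2) : det (x * y) = det x * det y := by
  simp only [mul_def, det, zdot, zcross, Matrix.cons_val_zero, Matrix.cons_val_one,
    Matrix.head_cons, Matrix.cons_val_two, Matrix.tail_cons]
  ring

end Zorn2
namespace Zorn2
lemma zcross_zero (u v : Fin 3 → ZMod 2) : zcross u v 0 = u 1 * v 2 - u 2 * v 1 := rfl
lemma zcross_one (u v : Fin 3 → ZMod 2) : zcross u v 1 = u 2 * v 0 - u 0 * v 2 := rfl
lemma zcross_two (u v : Fin 3 → ZMod 2) : zcross u v 2 = u 0 * v 1 - u 1 * v 0 := rfl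

lemma fin3_cases : ∀ j : Fin 3, j = 0 ∨ j = 1 ∨ j = 2 := by decide

set_option maxHeartbeats 2000000 in
lemma mul_sq (x y : Zorn2) : (x * y) * y = x * (y * y) := by
  refine ext' ?_ (funext fun i => ?_) (funext fun i => ?_) ?_ <;>
    [skip; rcases fin3_cases i with rfl | rfl | rfl;
     rcases fin3_cases i with rfl | rfl | rfl; skip] <;>
    simp only [mul_def, zdot, zcross_zero, zcross_one, zcross_two, Fin.isValue] <;>
    ring
end Zorn2
namespace Zorn2

lemma zeq : ∀ a b : ZMod 2, a = b ↔ a + b = 0 := by decide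
lemma zsqeq : ∀ a b : ZMod 2, a * a - b * b = 0 → a = b := by decide
lemma t2 : (2 : ZMod 2) = 0 := rfl

lemma mul_one' (w : Zorn2) : w * 1 = w := by
  refine ext' ?_ (funext fun i => ?_) (funext fun i => ?_) ?_ <;>
    [skip; rcases fin3_cases i with rfl | rfl | rfl;
     rcases fin3_cases i with rfl | rfl | rfl; skip] <;>
    simp only [mul_def, one_def, zdot, zcross_zero, zcross_one, zcross_two, Fin.isValue] <;>
    ring

lemma one_mul' (w : Zorn2) : 1 * w = w := by
  refine ext' ?_ (funext fun i => ?_) (funext fun i => ?_) ?_ <;>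
    [skip; rcases fin3_cases i with rfl | rfl | rfl;
     rcases fin3_cases i with rfl | rfl | rfl; skip] <;>
    simp only [mul_def, one_def, zdot, zcross_zero, zcross_one, zcross_two, Fin.isValue] <;>
    ring

lemma diag_of_sq_one {w : Zorn2} (h : w * w = 1) : w.a = w.b := by
  have h1 : (w * w).a = 1 := by rw [h]; rfl
  have h2 : (w * w).b = 1 := by rw [h]; rfl
  simp only [mul_def, zdot] at h1 h2
  exact zsqeq _ _ (by linear_combination h1 - h2)

lemma sq_one_of_diag {w : Zorn2} (hd : det w = 1) (h : w.a = w.b) : w * w = 1 := by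
  simp only [det, zdot] at hd
  refine ext' ?_ (funext fun i => ?_) (funext fun i => ?_) ?_ <;>
    [skip; rcases fin3_cases i with rfl | rfl | rfl;
     rcases fin3_cases i with rfl | rfl | rfl; skip] <;>
    simp only [mul_def, one_def, zdot, zcross_zero, zcross_one, zcross_two, Fin.isValue]
  · linear_combination w.a * h + hd +
      (w.alpha 0 * w.beta 0 + w.alpha 1 * w.beta 1 + w.alpha 2 * w.beta 2) * t2
  · linear_combination w.alpha 0 * h + w.b * w.alpha 0 * t2
  · linear_combination w.alpha 1 * h + w.b * w.alpha 1 * t2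
  · linear_combination w.alpha 2 * h + w.b * w.alpha 2 * t2
  · linear_combination w.beta 0 * h + w.b * w.beta 0 * t2
  · linear_combination w.beta 1 * h + w.b * w.beta 1 * t2
  · linear_combination w.beta 2 * h + w.b * w.beta 2 * t2
  · linear_combination (-w.b) * h + hd +
      (w.alpha 0 * w.beta 0 + w.alpha 1 * w.beta 1 + w.alpha 2 * w.beta 2) * t2

end Zorn2

open Zorn2 in
theorem stmt12 (x z : Zorn2)
    (hdx : Zorn2.det x = 1) (hdz : Zorn2.det z = 1)
    (hx2 : Zorn2.ord2 x) (hz3 : Zorn2.ord3 z)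
    (hxd : x.a = x.b) (hzd : z.b = 1 + z.a) :
    Zorn2.ord2 (z * x) ↔
      Zorn2.zdot x.alpha z.beta + Zorn2.zdot x.beta z.alpha = x.a := by
  have hdw : det (z * x) = 1 := by rw [det_mul, hdz, hdx, one_mul]
  have hab : (z * x).a + (z * x).b =
      zdot x.alpha z.beta + zdot x.beta z.alpha + x.a := by
    simp only [mul_def, zdot]
    linear_combination x.b * hzd + (1 + z.a) * hxd + (z.a * x.a) * t2 +
      (z.alpha 0 * x.beta 0 + z.alpha 1 * x.beta 1 + z.alpha 2 * x.beta 2) * t2 +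
      (z.beta 0 * x.alpha 0 + z.beta 1 * x.alpha 1 + z.beta 2 * x.alpha 2) * t2 -
      (z.a * x.a - z.a * x.b + x.a - x.b +
        z.alpha 0 * x.beta 0 + z.alpha 1 * x.beta 1 + z.alpha 2 * x.beta 2 +
        z.beta 0 * x.alpha 0 + z.beta 1 * x.alpha 1 + z.beta 2 * x.alpha 2) * t2
  have iffab : (z * x).a = (z * x).b ↔
      zdot x.alpha z.beta + zdot x.beta z.alpha = x.a := by
    rw [zeq, hab, ← zeq]
  constructor
  · intro h
    exact iffab.mp (diag_of_sq_one h.1)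
  · intro h
    refine ⟨sq_one_of_diag hdw (iffab.mpr h), fun hw => ?_⟩
    have hzx : z = x := by
      calc z = z * (x * x) := by rw [hx2.1, mul_one']
        _ = (z * x) * x := (mul_sq z x).symm
        _ = x := by rw [hw, one_mul']
    exact hz3.2.1 (by rw [hzx, hx2.1])
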